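/- arXiv:math/0408190 — 2 statements merged into one kernel-verified Lean document; each statement's English description precedes it below -/
import Mathlib

section
/- Let E be a topological graph, v ∈ E⁰, and e a negative orbit of v. Then the orbit space Orb(v, e) = ⋃_{v' ∈ Orb⁻(v,e)} Orb⁺(v') is an invariant subset of E⁰ (both positively and negatively invariant). -/
open Set Topology

variable {E0 E1 : Type*} [TopologicalSpace E0] [TopologicalSpace E1]

/-- A set is positively invariant if the range of every edge with domain in it lies in it. -/
def PosInv (d r : E1 → E0) (X : Set E0) : Prop := ∀ e : E1, d e ∈ X → r e ∈ X

/-- Sources: `E⁰ \ closure (r (E¹))`. -/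
def Sce (r : E1 → E0) : Set E0 := (closure (Set.range r))ᶜ

/-- Vertices having a neighborhood with compact `r`-preimage. -/
def FinSet (r : E1 → E0) : Set E0 := {v | ∃ V ∈ 𝓝 v, IsCompact (r ⁻¹' V)}

/-- Regular vertices. -/
def Rg (r : E1 → E0) : Set E0 := FinSet r \ closure (Sce r)

/-- Singular vertices. -/
def Sg (r : E1 → E0) : Set E0 := (Rg r)ᶜ

/-- A set is negatively invariant if every regular vertex in it receives an edge from it. -/
def NegInv (d r : E1 → E0) (X : Set E0) : Prop :=
  ∀ v ∈ X ∩ Rg r, ∃ e : E1, r e = v ∧ d e ∈ X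

/-- Invariant = positively and negatively invariant. -/
def Invariant (d r : E1 → E0) (X : Set E0) : Prop := PosInv d r X ∧ NegInv d r X

/-- The chain condition for a finite path `(e 0, e 1, …, e n)` of edges:
`d (e k) = r (e (k+1))`. -/
def IsPath (d r : E1 → E0) {n : ℕ} (e : Fin (n + 1) → E1) : Prop :=
  ∀ i : Fin n, d (e i.castSucc) = r (e i.succ)

/-- The positive orbit `Orb⁺(v)`: ranges of finite paths with domain `v`. -/
def OrbPlus (d r : E1 → E0) (v : E0) : Set E0 :=
  {v} ∪ {w | ∃ n : ℕ, ∃ e : Fin (n + 1) → E1,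
    IsPath d r e ∧ d (e (Fin.last n)) = v ∧ r (e 0) = w}

/-- An infinite path of edges. -/
def IsInfPath (d r : E1 → E0) (e : ℕ → E1) : Prop := ∀ k : ℕ, d (e k) = r (e (k + 1))

/-- `S` is the negative orbit space `Orb⁻(v, e)` of some negative orbit `e` of `v`:
either `v` itself (when `v` is singular), or a finite path ending at a singular vertex
with range `v`, or an infinite path with range `v`. -/
def IsNegOrbitSet (d r : E1 → E0) (v : E0) (S : Set E0) : Prop :=
  (v ∈ Sg r ∧ S = {v}) ∨
  (∃ n : ℕ, ∃ e : Fin (n + 1) → E1, IsPath d r e ∧ r (e 0) = v ∧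
    d (e (Fin.last n)) ∈ Sg r ∧ S = insert v (Set.range (d ∘ e))) ∨
  (∃ e : ℕ → E1, IsInfPath d r e ∧ r (e 0) = v ∧ S = insert v (Set.range (d ∘ e)))

/-- The orbit space `Orb(v, e) = ⋃_{v' ∈ Orb⁻(v,e)} Orb⁺(v')`, expressed in terms of the
negative orbit space `S = Orb⁻(v, e)`. -/
def Orb (d r : E1 → E0) (S : Set E0) : Set E0 := ⋃ v ∈ S, OrbPlus d r v

/-- A maximal head: a non-empty closed invariant set in which any two points can be
approximated by the positive orbit of a common vertex. -/
def MaximalHead (d r : E1 → E0) (X : Set E0) : Prop :=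
  X.Nonempty ∧ IsClosed X ∧ Invariant d r X ∧
  ∀ v1 ∈ X, ∀ v2 ∈ X, ∀ V1 ∈ 𝓝 v1, ∀ V2 ∈ 𝓝 v2,
    ∃ w ∈ X, (OrbPlus d r w ∩ V1).Nonempty ∧ (OrbPlus d r w ∩ V2).Nonempty

/-- Hereditary set: `d (r⁻¹ (V)) ⊆ V`. -/
def Hereditary (d r : E1 → E0) (V : Set E0) : Prop := d '' (r ⁻¹' V) ⊆ V

/-- Saturated set: every regular vertex all of whose received edges have domain in `V`
belongs to `V`. -/
def Saturated (d r : E1 → E0) (V : Set E0) : Prop :=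
  ∀ v ∈ Rg r, d '' (r ⁻¹' {v}) ⊆ V → v ∈ V

/-- `H(V) = ⋃ₙ dⁿ ((rⁿ)⁻¹ (V))`. -/
def HSet (d r : E1 → E0) (V : Set E0) : Set E0 :=
  V ∪ {w | ∃ n : ℕ, ∃ e : Fin (n + 1) → E1,
    IsPath d r e ∧ r (e 0) ∈ V ∧ d (e (Fin.last n)) = w}

/-- The sequence `V₀ = V`, `V_{k+1} = V_k ∪ {v ∈ E⁰_rg : d (r⁻¹ (v)) ⊆ V_k}`. -/
def SatSeq (d r : E1 → E0) (V : Set E0) : ℕ → Set E0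
  | 0 => V
  | k + 1 => SatSeq d r V k ∪ {v | v ∈ Rg r ∧ d '' (r ⁻¹' {v}) ⊆ SatSeq d r V k}

/-- The saturation `S(V) = ⋃ₖ V_k`. -/
def SatSet (d r : E1 → E0) (V : Set E0) : Set E0 := ⋃ k, SatSeq d r V k

/-- Sources of the subgraph on a closed positively invariant set `X`, viewed in `E⁰`:
`X⁰_sce = X⁰ \ closure_{X⁰} (r (X¹))` where `X¹ = d⁻¹ (X⁰)`. -/
def SceIn (d r : E1 → E0) (X : Set E0) : Set E0 := X \ closure (r '' (d ⁻¹' X))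

/-- Vertices of the subgraph on `X` having a relative neighborhood with compact
`r`-preimage in `X¹ = d⁻¹(X⁰)`. -/
def FinIn (d r : E1 → E0) (X : Set E0) : Set E0 :=
  {v | v ∈ X ∧ ∃ V ∈ 𝓝 v, IsCompact (r ⁻¹' (V ∩ X) ∩ d ⁻¹' X)}

/-- Infinite receivers of the subgraph on `X`. -/
def InfIn (d r : E1 → E0) (X : Set E0) : Set E0 := X \ FinIn d r X

/-- Regular vertices of the subgraph on `X`. -/
def RgIn (d r : E1 → E0) (X : Set E0) : Set E0 := FinIn d r X \ closure (SceIn d r X)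

/-- Singular vertices of the subgraph on `X`. -/
def SgIn (d r : E1 → E0) (X : Set E0) : Set E0 := X \ RgIn d r X


lemma posInv_orbPlus (d r : E1 → E0) (w : E0) :
    PosInv d r (OrbPlus d r w) := by
  intro f hf
  rcases hf with hf | ⟨n, p, hp, hlast, h0⟩
  · exact Or.inr ⟨0, fun _ => f, fun i => i.elim0, hf, rfl⟩
  · refine Or.inr ⟨n + 1, Fin.cases f p, ?_, ?_, ?_⟩
    · intro i
      induction i using Fin.cases with
      | zero => simp only [Fin.cases_succ]; simpa using h0.symm
      | succ j => simpa [← Fin.succ_castSucc] using hp j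
    · have h : Fin.last (n + 1) = (Fin.last n).succ := rfl
      rw [h]; simp only [Fin.cases_succ]; simpa using hlast
    · simp

lemma path_mem {X : Set E0} {d r : E1 → E0} (hX : PosInv d r X) {n : ℕ}
    {e : Fin (n + 1) → E1} (hp : IsPath d r e) (h : d (e (Fin.last n)) ∈ X) :
    ∀ i, d (e i) ∈ X := by
  have key : ∀ k : ℕ, ∀ i : Fin (n + 1), i.val + k = n → d (e i) ∈ X := by
    intro k
    induction k with
    | zero =>
      intro i hi
      have hi' : i = Fin.last n := Fin.ext (by simpa using hi)
      rwa [hi']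
    | succ k ih =>
      intro i hi
      have hlt : i.val < n := by omega
      have hi' : i = (⟨i.val, hlt⟩ : Fin n).castSucc := Fin.ext rfl
      have h1 := hp ⟨i.val, hlt⟩
      have h2 : d (e (⟨i.val, hlt⟩ : Fin n).succ) ∈ X :=
        ih _ (by simp [Fin.val_succ]; omega)
      rw [hi', h1]
      exact hX _ h2
  intro i
  exact key (n - i.val) i (by omega)

theorem stmt7 [LocallyCompactSpace E0] [T2Space E0] [LocallyCompactSpace E1] [T2Space E1]
    (d r : E1 → E0) (hd : IsLocalHomeomorph d) (hr : Continuous r)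
    (v : E0) (S : Set E0) (hS : IsNegOrbitSet d r v S) :
    Invariant d r (Orb d r S) := by
  have hS_sub : S ⊆ Orb d r S := fun w hw => Set.mem_biUnion hw (Or.inl rfl)
  have hpos : PosInv d r (Orb d r S) := by
    intro f hf
    rcases Set.mem_iUnion₂.mp hf with ⟨w, hw, hfw⟩
    exact Set.mem_biUnion hw (posInv_orbPlus d r w f hfw)
  refine ⟨hpos, ?_⟩
  rintro v' ⟨hvO, hvRg⟩
  rcases Set.mem_iUnion₂.mp hvO with ⟨w, hw, hvw⟩
  rcases hvw with hvw | ⟨n, p, hp, hlast, h0⟩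
  · -- v' = w ∈ S
    have hvw' : v' = w := hvw
    subst hvw'
    rcases hS with ⟨hvsg, rfl⟩ | ⟨n, e, hp, h0, hsg, rfl⟩ | ⟨e, hp, h0, rfl⟩
    · have : v' = v := hw
      subst this
      exact absurd hvRg hvsg
    · rcases Set.mem_insert_iff.mp hw with rfl | ⟨i, hi⟩
      · exact ⟨e 0, h0, hS_sub (Set.mem_insert_of_mem _ ⟨0, rfl⟩)⟩
      · rcases Nat.lt_or_ge i.val n with hlt | hge
        · have hic : i = (⟨i.val, hlt⟩ : Fin n).castSucc := Fin.ext rfl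
          refine ⟨e (⟨i.val, hlt⟩ : Fin n).succ, ?_, ?_⟩
          · rw [← hp ⟨i.val, hlt⟩, ← hic]; exact hi
          · exact hS_sub (Set.mem_insert_of_mem _ ⟨_, rfl⟩)
        · have : i = Fin.last n := Fin.ext (le_antisymm (Nat.le_of_lt_succ i.isLt) hge)
          rw [this] at hi
          rw [← hi] at hvRg
          exact absurd hvRg hsg
    · rcases Set.mem_insert_iff.mp hw with rfl | ⟨k, hk⟩
      · exact ⟨e 0, h0, hS_sub (Set.mem_insert_of_mem _ ⟨0, rfl⟩)⟩
      · refine ⟨e (k + 1), ?_, hS_sub (Set.mem_insert_of_mem _ ⟨k + 1, rfl⟩)⟩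
        rw [← hp k]; exact hk
  · refine ⟨p 0, h0, ?_⟩
    have hwO : w ∈ Orb d r S := hS_sub hw
    rw [← hlast] at hwO
    exact path_mem hpos hp hwO 0
end

section
/- Let E be a topological graph, v ∈ E⁰ and e a negative orbit of v. Then the closed set closure(Orb(v, e)) is a maximal head: it is a non-empty closed invariant set such that for any v₁, v₂ in it and any neighborhoods V₁ of v₁ and V₂ of v₂, there exists w in the set with Orb⁺(w) ∩ V₁ ≠ ∅ and Orb⁺(w) ∩ V₂ ≠ ∅. -/
open Set Topology

variable {E0 E1 : Type*} [TopologicalSpace E0] [TopologicalSpace E1]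

section Aux

variable {E0 E1 : Type*} [TopologicalSpace E0] [TopologicalSpace E1]

/-- One-step reachability: `b` is the range of an edge with domain `a`. -/
def StepRel (d r : E1 → E0) (a b : E0) : Prop := ∃ f : E1, d f = a ∧ r f = b

lemma isPath_rtg {d r : E1 → E0} :
    ∀ (n : ℕ) (e : Fin (n + 1) → E1), IsPath d r e →
      Relation.ReflTransGen (StepRel d r) (d (e (Fin.last n))) (r (e 0)) := by
  intro n
  induction n with
  | zero =>
    intro e _
    exact Relation.ReflTransGen.single ⟨e 0, rfl, rfl⟩
  | succ n ih =>
    intro e hp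
    have hp' : IsPath d r (e ∘ Fin.succ) := by
      intro i
      have := hp i.succ
      simpa only [Function.comp_apply, Fin.succ_castSucc] using this
    have h1 := ih (e ∘ Fin.succ) hp'
    simp only [Function.comp_apply, Fin.succ_last] at h1
    exact h1.tail ⟨e 0, by simpa using hp 0, rfl⟩

lemma orbPlus_eq_rtg (d r : E1 → E0) (v : E0) :
    OrbPlus d r v = {w | Relation.ReflTransGen (StepRel d r) v w} := by
  ext w
  constructor
  · rintro (rfl | ⟨n, e, hp, hlast, h0⟩)
    · exact Relation.ReflTransGen.refl
    · exact hlast ▸ h0 ▸ isPath_rtg n e hp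
  · intro h
    induction h with
    | refl => exact Or.inl rfl
    | tail hab hbw ih =>
      obtain ⟨f, hdf, hrf⟩ := hbw
      rcases ih with rfl | ⟨n, e, hp, hlast, h0⟩
      · exact Or.inr ⟨0, fun _ => f, fun i => i.elim0, hdf, hrf⟩
      · refine Or.inr ⟨n + 1, Fin.cons f e, ?_, ?_, ?_⟩
        · intro i
          refine Fin.cases ?_ (fun j => ?_) i
          · simpa [hdf, h0] using rfl
          · have : (j.succ).castSucc = (j.castSucc).succ := (Fin.succ_castSucc j).symm
            rw [this]
            simpa using hp j
        · have : Fin.last (n + 1) = (Fin.last n).succ := (Fin.succ_last n).symm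
          rw [this]
          simpa using hlast
        · simpa using hrf

lemma mem_orbPlus_self (d r : E1 → E0) (v : E0) : v ∈ OrbPlus d r v := Or.inl rfl

lemma orbPlus_trans {d r : E1 → E0} {a b : E0} (h : a ∈ OrbPlus d r b) :
    OrbPlus d r a ⊆ OrbPlus d r b := by
  intro x hx
  rw [orbPlus_eq_rtg] at h hx ⊢
  exact h.trans hx

lemma mem_orb_of_mem {d r : E1 → E0} {S : Set E0} {s : E0} (hs : s ∈ S) : s ∈ Orb d r S :=
  Set.mem_biUnion hs (mem_orbPlus_self d r s)

lemma posInv_orb (d r : E1 → E0) (S : Set E0) : PosInv d r (Orb d r S) := by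
  intro e he
  obtain ⟨s, hs, hmem⟩ := Set.mem_iUnion₂.mp he
  refine Set.mem_biUnion hs ?_
  rw [orbPlus_eq_rtg] at *
  exact hmem.tail ⟨e, rfl, rfl⟩

lemma finSet_open (r : E1 → E0) : IsOpen (FinSet r) := by
  rw [isOpen_iff_mem_nhds]
  rintro v ⟨V, hV, hc⟩
  filter_upwards [interior_mem_nhds.mpr hV] with x hx
  exact ⟨V, mem_interior_iff_mem_nhds.mp hx, hc⟩

lemma rg_open (r : E1 → E0) : IsOpen (Rg r) :=
  (finSet_open r).sdiff isClosed_closure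

lemma negInv_orb {d r : E1 → E0} {v : E0} {S : Set E0} (hS : IsNegOrbitSet d r v S) :
    NegInv d r (Orb d r S) := by
  rintro w ⟨hw, hreg⟩
  obtain ⟨s, hs, hmem⟩ := Set.mem_iUnion₂.mp hw
  rw [orbPlus_eq_rtg] at hmem
  rcases hmem.cases_tail with rfl | ⟨c, hsc, f, hdf, hrf⟩
  swap
  · refine ⟨f, hrf, ?_⟩
    refine Set.mem_biUnion hs ?_
    rw [orbPlus_eq_rtg]
    exact hdf ▸ hsc
  -- w = s ∈ S
  rcases hS with ⟨hsg, rfl⟩ | ⟨n, e, hp, h0, hsg, rfl⟩ | ⟨e, hp, h0, rfl⟩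
  · exact absurd hreg (Set.mem_singleton_iff.mp hs ▸ hsg)
  · rcases hs with rfl | ⟨k, hk⟩
    · exact ⟨e 0, h0, mem_orb_of_mem (Set.mem_insert_iff.mpr (Or.inr ⟨0, rfl⟩))⟩
    · by_cases hkl : (k : ℕ) < n
      · refine ⟨e (⟨k, hkl⟩ : Fin n).succ, ?_, mem_orb_of_mem (Set.mem_insert_iff.mpr (Or.inr ⟨_, rfl⟩))⟩
        have h1 := hp ⟨k, hkl⟩
        have h2 : (⟨k, hkl⟩ : Fin n).castSucc = k := by ext; simp
        rw [h2] at h1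
        rw [← h1]
        exact hk
      · have hkeq : k = Fin.last n := by
          ext; simpa [Fin.last] using Nat.le_antisymm (Nat.lt_succ_iff.mp k.isLt) (Nat.le_of_not_lt hkl)
        exfalso
        apply hsg
        have h3 : d (e (Fin.last n)) = w := by rw [← hkeq]; exact hk
        rw [h3]
        exact hreg
  · rcases hs with rfl | ⟨k, hk⟩
    · exact ⟨e 0, h0, mem_orb_of_mem (Set.mem_insert_iff.mpr (Or.inr ⟨0, rfl⟩))⟩
    · exact ⟨e (k + 1), (hp k).symm.trans hk, mem_orb_of_mem (Set.mem_insert_iff.mpr (Or.inr ⟨k + 1, rfl⟩))⟩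

/-- Comparability of positive orbits along a negative orbit. -/
lemma orbPlus_chain {d r : E1 → E0} {v : E0} {S : Set E0} (hS : IsNegOrbitSet d r v S) :
    ∀ s₁ ∈ S, ∀ s₂ ∈ S, OrbPlus d r s₁ ⊆ OrbPlus d r s₂ ∨ OrbPlus d r s₂ ⊆ OrbPlus d r s₁ := by
  have key : ∀ s₁ ∈ S, ∀ s₂ ∈ S,
      Relation.ReflTransGen (StepRel d r) s₂ s₁ ∨ Relation.ReflTransGen (StepRel d r) s₁ s₂ := by
    rcases hS with ⟨_, rfl⟩ | ⟨n, e, hp, h0, _, rfl⟩ | ⟨e, hp, h0, rfl⟩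
    · rintro s₁ rfl s₂ rfl
      exact Or.inl Relation.ReflTransGen.refl
    · -- finite path case
      have A : ∀ (k : ℕ) (hk : k ≤ n) (j : ℕ) (hj : j ≤ k),
          Relation.ReflTransGen (StepRel d r) (d (e ⟨k, Nat.lt_succ_of_le hk⟩))
            (d (e ⟨j, Nat.lt_succ_of_le (hj.trans hk)⟩)) := by
        intro k
        induction k with
        | zero => intro _ j hj; interval_cases j; exact Relation.ReflTransGen.refl
        | succ k ih =>
          intro hk j hj
          rcases Nat.lt_succ_iff_lt_or_eq.mp (Nat.lt_succ_of_le hj) with h | rfl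
          · refine Relation.ReflTransGen.head ?_ (ih (Nat.le_of_succ_le hk) j (Nat.lt_succ_iff.mp h))
            refine ⟨e ⟨k + 1, Nat.lt_succ_of_le hk⟩, rfl, ?_⟩
            have := hp ⟨k, hk⟩
            simpa [Fin.castSucc, Fin.succ] using this.symm
          · exact Relation.ReflTransGen.refl
      have B : ∀ (k : ℕ) (hk : k ≤ n),
          Relation.ReflTransGen (StepRel d r) (d (e ⟨k, Nat.lt_succ_of_le hk⟩)) v := by
        intro k hk
        refine (A k hk 0 (Nat.zero_le k)).tail ⟨e 0, ?_, h0⟩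
        congr 1
      rintro s₁ (rfl | ⟨k₁, rfl⟩) s₂ (rfl | ⟨k₂, rfl⟩)
      · exact Or.inl Relation.ReflTransGen.refl
      · exact Or.inl (by simpa using B k₂ (Nat.lt_succ_iff.mp k₂.isLt))
      · exact Or.inr (by simpa using B k₁ (Nat.lt_succ_iff.mp k₁.isLt))
      · rcases le_total (k₁ : ℕ) (k₂ : ℕ) with h | h
        · exact Or.inl (by simpa using A k₂ (Nat.lt_succ_iff.mp k₂.isLt) k₁ h)
        · exact Or.inr (by simpa using A k₁ (Nat.lt_succ_iff.mp k₁.isLt) k₂ h)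
    · -- infinite path case
      have A : ∀ (k j : ℕ), j ≤ k →
          Relation.ReflTransGen (StepRel d r) (d (e k)) (d (e j)) := by
        intro k
        induction k with
        | zero => intro j hj; interval_cases j; exact Relation.ReflTransGen.refl
        | succ k ih =>
          intro j hj
          rcases Nat.lt_succ_iff_lt_or_eq.mp (Nat.lt_succ_of_le hj) with h | rfl
          · exact Relation.ReflTransGen.head ⟨e (k + 1), rfl, (hp k).symm⟩ (ih j (Nat.lt_succ_iff.mp h))
          · exact Relation.ReflTransGen.refl
      have B : ∀ k : ℕ, Relation.ReflTransGen (StepRel d r) (d (e k)) v :=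
        fun k => (A k 0 (Nat.zero_le k)).tail ⟨e 0, rfl, h0⟩
      rintro s₁ (rfl | ⟨k₁, rfl⟩) s₂ (rfl | ⟨k₂, rfl⟩)
      · exact Or.inl Relation.ReflTransGen.refl
      · exact Or.inl (B k₂)
      · exact Or.inr (B k₁)
      · rcases le_total k₁ k₂ with h | h
        · exact Or.inl (A k₂ k₁ h)
        · exact Or.inr (A k₁ k₂ h)
  intro s₁ hs₁ s₂ hs₂
  rcases key s₁ hs₁ s₂ hs₂ with h | h
  · exact Or.inl (orbPlus_trans (by rw [orbPlus_eq_rtg]; exact h))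
  · exact Or.inr (orbPlus_trans (by rw [orbPlus_eq_rtg]; exact h))

lemma posInv_closure {d r : E1 → E0} (hd : IsLocalHomeomorph d) (hr : Continuous r)
    {X : Set E0} (hX : PosInv d r X) : PosInv d r (closure X) := by
  intro e he
  obtain ⟨φ, heφ, hdφ⟩ := hd e
  have hde : d e ∈ φ.target := by rw [hdφ]; exact φ.map_source heφ
  set g : E0 → E0 := r ∘ φ.symm with hg
  have hcont : ContinuousWithinAt g (X ∩ φ.target) (d e) :=
    (hr.continuousAt.comp (φ.symm.continuousAt (by rwa [φ.symm_source]))).continuousWithinAt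
  have h1 : d e ∈ closure (X ∩ φ.target) := by
    have := IsOpen.inter_closure φ.open_target (t := X) ⟨hde, he⟩
    rwa [Set.inter_comm] at this
  have h2 := hcont.mem_closure_image h1
  have h3 : g '' (X ∩ φ.target) ⊆ X := by
    rintro _ ⟨x, ⟨hx, hxt⟩, rfl⟩
    refine hX (φ.symm x) ?_
    rw [hdφ, φ.right_inv hxt]
    exact hx
  have hge : g (d e) = r e := by
    rw [hg, hdφ]
    simp only [Function.comp_apply, φ.left_inv heφ]
  rw [hge] at h2
  exact closure_mono h3 h2

lemma negInv_closure {d r : E1 → E0} (hdc : Continuous d) (hr : Continuous r)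
    [T2Space E0] {X : Set E0} (hX : NegInv d r X) : NegInv d r (closure X) := by
  rintro w ⟨hw, hreg⟩
  obtain ⟨V, hV, hc⟩ := hreg.1
  set G := Filter.comap r (𝓝 w) ⊓ Filter.principal (d ⁻¹' X) with hG
  have hne : G.NeBot := by
    rw [hG, Filter.inf_principal_neBot_iff]
    intro U hU
    obtain ⟨N, hN, hNU⟩ := hU
    have hNRg : N ∩ Rg r ∈ 𝓝 w := Filter.inter_mem hN ((rg_open r).mem_nhds hreg)
    obtain ⟨w', hw'N, hw'X⟩ := mem_closure_iff_nhds.mp hw _ hNRg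
    obtain ⟨f, hrf, hdf⟩ := hX w' ⟨hw'X, hw'N.2⟩
    exact ⟨f, hNU (by simp [hrf, hw'N.1]), hdf⟩
  have hle : G ≤ Filter.principal (r ⁻¹' V) :=
    le_trans inf_le_left (Filter.le_principal_iff.mpr (Filter.preimage_mem_comap hV))
  obtain ⟨f, hfV, hcl⟩ := hc.exists_clusterPt hle
  have hrfw : r f = w := by
    have h1 : ClusterPt (r f) (𝓝 w) :=
      hcl.map hr.continuousAt (Filter.tendsto_iff_comap.mpr inf_le_left)
    exact eq_of_nhds_neBot h1
  refine ⟨f, hrfw, ?_⟩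
  have h2 : ClusterPt f (Filter.principal (d ⁻¹' X)) := hcl.mono inf_le_right
  have h3 : f ∈ closure (d ⁻¹' X) := mem_closure_iff_clusterPt.mpr h2
  exact hdc.closure_preimage_subset X h3

end Aux

theorem stmt9 [LocallyCompactSpace E0] [T2Space E0] [LocallyCompactSpace E1] [T2Space E1]
    (d r : E1 → E0) (hd : IsLocalHomeomorph d) (hr : Continuous r)
    (v : E0) (S : Set E0) (hS : IsNegOrbitSet d r v S) :
    MaximalHead d r (closure (Orb d r S)) := by
  have hvS : v ∈ S := by
    rcases hS with ⟨_, rfl⟩ | ⟨n, e, _, _, _, rfl⟩ | ⟨e, _, _, rfl⟩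
    · exact rfl
    · exact Set.mem_insert _ _
    · exact Set.mem_insert _ _
  refine ⟨⟨v, subset_closure (mem_orb_of_mem hvS)⟩, isClosed_closure, ⟨?_, ?_⟩, ?_⟩
  · exact posInv_closure hd hr (posInv_orb d r S)
  · exact negInv_closure hd.continuous hr (negInv_orb hS)
  · intro v₁ hv₁ v₂ hv₂ V₁ hV₁ V₂ hV₂
    obtain ⟨u₁, hu₁V, hu₁O⟩ := mem_closure_iff_nhds.mp hv₁ V₁ hV₁
    obtain ⟨u₂, hu₂V, hu₂O⟩ := mem_closure_iff_nhds.mp hv₂ V₂ hV₂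
    obtain ⟨s₁, hs₁, hm₁⟩ := Set.mem_iUnion₂.mp hu₁O
    obtain ⟨s₂, hs₂, hm₂⟩ := Set.mem_iUnion₂.mp hu₂O
    rcases orbPlus_chain hS s₁ hs₁ s₂ hs₂ with h | h
    · exact ⟨s₂, subset_closure (mem_orb_of_mem hs₂), ⟨u₁, h hm₁, hu₁V⟩, ⟨u₂, hm₂, hu₂V⟩⟩
    · exact ⟨s₁, subset_closure (mem_orb_of_mem hs₁), ⟨u₁, hm₁, hu₁V⟩, ⟨u₂, h hm₂, hu₂V⟩⟩
end
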